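/- Let m > 1, 1 ≤ p < m, let σ be a real number with σ(m−1) + 2(p−1) > 0, let N ≥ 1 be an integer, and set α = (σ+2)/(σ(m−1)+2(p−1)) and β = (m−p)/(σ(m−1)+2(p−1)). Then there is no R > 0 and no twice continuously differentiable positive nondecreasing function f : (R,∞) → (0,∞) that solves (f^m)''(ξ) + ((N−1)/ξ)(f^m)'(ξ) − α f(ξ) + β ξ f'(ξ) + ξ^σ f(ξ)^p = 0 on (R,∞) and satisfies ξ^σ f(ξ)^{p−1} → +∞ as ξ → ∞. -/

import Mathlib

open Set Filter

private lemma aux_deriv_nonneg {f : ℝ → ℝ} {R ξ : ℝ} (hm : MonotoneOn f (Set.Ioi R))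
    (hξ : ξ ∈ Set.Ioi R) (hd : DifferentiableAt ℝ f ξ) : 0 ≤ deriv f ξ := by
  have h := hd.hasDerivAt
  rw [hasDerivAt_iff_tendsto_slope] at h
  have h' : Tendsto (slope f ξ) (nhdsWithin ξ (Set.Ioi ξ)) (nhds (deriv f ξ)) :=
    h.mono_left (nhdsWithin_mono _ (fun x hx => Set.mem_compl_singleton_iff.mpr (ne_of_gt (show ξ < x from hx))))
  refine ge_of_tendsto h' ?_
  filter_upwards [self_mem_nhdsWithin,
    mem_nhdsWithin_of_mem_nhds (isOpen_Ioi.mem_nhds hξ)] with x hx1 hx2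
  have h1 : f ξ ≤ f x := hm hξ hx2 (le_of_lt hx1)
  have h2 : (0:ℝ) < x - ξ := sub_pos.2 hx1
  rw [slope_def_field]
  exact div_nonneg (by linarith) h2.le

/-- Lemma 3.6, Case 3, Step 3: no positive nondecreasing C² solution of the
self-similar profile ODE on (R,∞) can satisfy ξ^σ f(ξ)^(p-1) → +∞ as ξ → ∞. -/
theorem no_increasing_unbounded_reaction_solution (m p σ : ℝ) (N : ℕ)
    (hm : 1 < m) (hp1 : 1 ≤ p) (hpm : p < m)
    (hL : 0 < σ * (m - 1) + 2 * (p - 1)) (hN : 1 ≤ N)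
    (α β : ℝ)
    (hα : α = (σ + 2) / (σ * (m - 1) + 2 * (p - 1)))
    (hβ : β = (m - p) / (σ * (m - 1) + 2 * (p - 1))) :
    ¬ ∃ R > (0 : ℝ), ∃ f : ℝ → ℝ,
      (∀ ξ ∈ Set.Ioi R, 0 < f ξ ∧ DifferentiableAt ℝ f ξ ∧
        DifferentiableAt ℝ (deriv f) ξ) ∧
      ContinuousOn (deriv (deriv f)) (Set.Ioi R) ∧
      MonotoneOn f (Set.Ioi R) ∧
      (∀ ξ ∈ Set.Ioi R,
        deriv (deriv fun x => f x ^ m) ξ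
          + ((N : ℝ) - 1) / ξ * deriv (fun x => f x ^ m) ξ
          - α * f ξ + β * ξ * deriv f ξ + ξ ^ σ * f ξ ^ p = 0) ∧
      Filter.Tendsto (fun ξ : ℝ => ξ ^ σ * f ξ ^ (p - 1))
        Filter.atTop Filter.atTop := by
  rintro ⟨R, hR, f, hreg, hC2, hmono, hODE, hlim⟩
  set g : ℝ → ℝ := fun x => f x ^ m with hg
  have hβpos : 0 < β := by
    rw [hβ]; exact div_pos (by linarith) hL
  -- basic facts on Ioi R
  have hfpos : ∀ ξ ∈ Set.Ioi R, 0 < f ξ := fun ξ hξ => (hreg ξ hξ).1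
  have hfd : ∀ ξ ∈ Set.Ioi R, DifferentiableAt ℝ f ξ := fun ξ hξ => (hreg ξ hξ).2.1
  have hf'nn : ∀ ξ ∈ Set.Ioi R, 0 ≤ deriv f ξ :=
    fun ξ hξ => aux_deriv_nonneg hmono hξ (hfd ξ hξ)
  have hgderiv : ∀ ξ ∈ Set.Ioi R, deriv g ξ = deriv f ξ * m * f ξ ^ (m - 1) := by
    intro ξ hξ
    exact ((hfd ξ hξ).hasDerivAt.rpow_const (Or.inl (hfpos ξ hξ).ne')).deriv
  have hg'nn : ∀ ξ ∈ Set.Ioi R, 0 ≤ deriv g ξ := by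
    intro ξ hξ
    rw [hgderiv ξ hξ]
    exact mul_nonneg (mul_nonneg (hf'nn ξ hξ) (by linarith)) (Real.rpow_nonneg (hfpos ξ hξ).le _)
  have hgdiff : ∀ ξ ∈ Set.Ioi R, DifferentiableAt ℝ (deriv g) ξ := by
    intro ξ hξ
    have heq : deriv g =ᶠ[nhds ξ] fun x => deriv f x * m * f x ^ (m - 1) := by
      filter_upwards [isOpen_Ioi.mem_nhds hξ] with x hx
      exact hgderiv x hx
    have hd : DifferentiableAt ℝ (fun x => deriv f x * m * f x ^ (m - 1)) ξ :=
      ((hreg ξ hξ).2.2.mul_const m).mul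
        ((hfd ξ hξ).rpow_const (Or.inl (hfpos ξ hξ).ne'))
    exact heq.differentiableAt_iff.mpr hd
  -- choose ξ₀
  obtain ⟨M, hM⟩ := (hlim.eventually_ge_atTop (α + 1)).exists_forall_of_atTop
  set ξ₀ : ℝ := max M (R + 1) with hξ₀def
  have hξ₀R : ξ₀ ∈ Set.Ioi R := by
    simp only [Set.mem_Ioi]
    calc R < R + 1 := by linarith
    _ ≤ ξ₀ := le_max_right _ _
  set c : ℝ := f ξ₀ with hc
  have hcpos : 0 < c := hfpos ξ₀ hξ₀R
  -- key bound
  have hkey : ∀ x, ξ₀ ≤ x → deriv (deriv g) x ≤ -c := by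
    intro x hx
    have hxR : x ∈ Set.Ioi R := lt_of_lt_of_le hξ₀R hx
    have hxpos : 0 < x := lt_trans hR hxR
    have hode := hODE x hxR
    have hrw : x ^ σ * f x ^ p = (x ^ σ * f x ^ (p - 1)) * f x := by
      rw [mul_assoc, ← Real.rpow_add_one (hfpos x hxR).ne' (p - 1)]
      ring_nf
    have hA : α + 1 ≤ x ^ σ * f x ^ (p - 1) := hM x (le_trans (le_max_left _ _) hx)
    have hfx : c ≤ f x := hmono hξ₀R hxR hx
    have h1 : 0 ≤ β * x * deriv f x :=
      mul_nonneg (mul_nonneg hβpos.le hxpos.le) (hf'nn x hxR)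
    have h2 : 0 ≤ ((N : ℝ) - 1) / x * deriv g x := by
      apply mul_nonneg (div_nonneg _ hxpos.le) (hg'nn x hxR)
      have : (1 : ℝ) ≤ (N : ℝ) := by exact_mod_cast hN
      linarith
    have h3 : (α + 1) * f x ≤ (x ^ σ * f x ^ (p - 1)) * f x :=
      mul_le_mul_of_nonneg_right hA (hfpos x hxR).le
    have hfpx : 0 < f x := hfpos x hxR
    nlinarith [hode, hrw]
  -- the auxiliary function h
  set h : ℝ → ℝ := fun x => deriv g x + c * x with hh
  have hIci : Set.Ici ξ₀ ⊆ Set.Ioi R := fun x hx => show R < x from lt_of_lt_of_le hξ₀R hx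
  have hhderiv : ∀ x ∈ Set.Ioi ξ₀, HasDerivAt h (deriv (deriv g) x + c) x := by
    intro x hx
    have hxR : x ∈ Set.Ioi R := show R < x from lt_trans hξ₀R hx
    have := ((hgdiff x hxR).hasDerivAt).add ((hasDerivAt_id x).const_mul c)
    simp at this
    exact this
  have hant : AntitoneOn h (Set.Ici ξ₀) := by
    apply antitoneOn_of_deriv_nonpos (convex_Ici ξ₀)
    · intro x hx
      exact (((hgdiff x (hIci hx)).add
        ((differentiable_id.const_mul c) x)).continuousAt).continuousWithinAt
    · rw [interior_Ici]
      intro x hx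
      exact ((hhderiv x hx).differentiableAt).differentiableWithinAt
    · rw [interior_Ici]
      intro x hx
      rw [(hhderiv x hx).deriv]
      have := hkey x (le_of_lt hx)
      linarith
  -- contradiction
  set ξ₁ : ℝ := ξ₀ + (deriv g ξ₀ + 1) / c with hξ₁def
  have hstep : 0 < (deriv g ξ₀ + 1) / c :=
    div_pos (by have := hg'nn ξ₀ hξ₀R; linarith) hcpos
  have hξ₁ : ξ₀ ≤ ξ₁ := by
    show ξ₀ ≤ ξ₀ + (deriv g ξ₀ + 1) / c
    linarith
  have hle := hant (Set.self_mem_Ici) (Set.mem_Ici.mpr hξ₁) hξ₁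
  have hcdist : c * (ξ₁ - ξ₀) = deriv g ξ₀ + 1 := by
    rw [hξ₁def]
    field_simp
    ring
  have hg1 : 0 ≤ deriv g ξ₁ := hg'nn ξ₁ (hIci (Set.mem_Ici.mpr hξ₁))
  simp only [hh] at hle
  nlinarith [hle, hcdist, hg1]
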